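/- Let d ≥ 3, let σ be a smooth defining function for Σ on an open set U ⊆ ℝ^d, and suppose that for some integer k with 1 ≤ k ≤ d − 1 there is a smooth function A on U with S(σ) = 1 + σ^k · A. Then there exist an open set V with Σ ⊆ V ⊆ U and a smooth function f on V such that σ' := σ·(1 + f·σ^k) is again a defining function for Σ on V and S(σ') = 1 + σ^{k+1} · A' on V for some smooth function A'. (The order-by-order improvement step, valid precisely for k < d, used to construct asymptotic solutions of the singular Yamabe problem; the construction fails at k = d, where the obstruction density appears.) -/

import Mathlib

open RealInnerProductSpace

/-- The flat Euclidean Laplacian of `σ : ℝ^d → ℝ`. -/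
noncomputable def flatLaplacian {d : ℕ} (σ : EuclideanSpace ℝ (Fin d) → ℝ)
    (x : EuclideanSpace ℝ (Fin d)) : ℝ :=
  ∑ i : Fin d, fderiv ℝ (fun y => fderiv ℝ σ y (EuclideanSpace.single i 1)) x
    (EuclideanSpace.single i 1)

/-- The flat S-curvature `S(σ) = ‖∇σ‖² − (2σ/d)Δσ`. -/
noncomputable def Scurv {d : ℕ} (σ : EuclideanSpace ℝ (Fin d) → ℝ)
    (x : EuclideanSpace ℝ (Fin d)) : ℝ :=
  ‖gradient σ x‖ ^ 2 - (2 * σ x / d) * flatLaplacian σ x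

/-- `σ` is a smooth defining function for `Z` on `U`. -/
def IsDefiningFn {d : ℕ} (σ : EuclideanSpace ℝ (Fin d) → ℝ)
    (U Z : Set (EuclideanSpace ℝ (Fin d))) : Prop :=
  ContDiffOn ℝ (⊤ : ℕ∞) σ U ∧ Z = {x ∈ U | σ x = 0} ∧ ∀ x ∈ Z, fderiv ℝ σ x ≠ 0

/-! ### Auxiliary machinery -/

/-- The partial derivative in direction `i`. -/
noncomputable def Dp {d : ℕ} (i : Fin d) (u : EuclideanSpace ℝ (Fin d) → ℝ)
    (x : EuclideanSpace ℝ (Fin d)) : ℝ := fderiv ℝ u x (EuclideanSpace.single i 1)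

lemma norm_grad_sq {d : ℕ} (u : EuclideanSpace ℝ (Fin d) → ℝ) (x : EuclideanSpace ℝ (Fin d)) :
    ‖gradient u x‖ ^ 2 = ∑ i : Fin d, (Dp i u x) ^ 2 := by
  have h : ∀ i, Dp i u x = gradient u x i := by
    intro i
    have : fderiv ℝ u x (EuclideanSpace.single i 1)
        = ⟪gradient u x, EuclideanSpace.single i (1:ℝ)⟫ := by
      simp [gradient, InnerProductSpace.toDual_symm_apply]
    rw [Dp, this, EuclideanSpace.inner_single_right]
    simp
  rw [EuclideanSpace.norm_eq, Real.sq_sqrt (by positivity)]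
  exact Finset.sum_congr rfl fun i _ => by rw [h i]; simp [sq_abs]

lemma scurv_eq {d : ℕ} (u : EuclideanSpace ℝ (Fin d) → ℝ) (x) :
    Scurv u x = (∑ i : Fin d, (Dp i u x) ^ 2)
      - (2 * u x / d) * ∑ i : Fin d, Dp i (Dp i u) x := by
  rw [Scurv, norm_grad_sq]; rfl

lemma contDiffOn_Dp {d : ℕ} {V : Set (EuclideanSpace ℝ (Fin d))} (hV : IsOpen V)
    {u : EuclideanSpace ℝ (Fin d) → ℝ} (hu : ContDiffOn ℝ (⊤:ℕ∞) u V) (i : Fin d) :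
    ContDiffOn ℝ (⊤:ℕ∞) (Dp i u) V := by
  have := (hu.fderiv_of_isOpen hV
      (by rw [show ((⊤:ℕ∞):WithTop ℕ∞) = (⊤:ℕ∞)+1 from rfl])).clm_apply
    (contDiffOn_const (c := EuclideanSpace.single i (1:ℝ)))
  exact this

lemma diffAt {d : ℕ} {V : Set (EuclideanSpace ℝ (Fin d))} (hV : IsOpen V)
    {u : EuclideanSpace ℝ (Fin d) → ℝ} (hu : ContDiffOn ℝ (⊤:ℕ∞) u V)
    {x} (hx : x ∈ V) : DifferentiableAt ℝ u x :=
  (hu.differentiableOn (by norm_num)).differentiableAt (hV.mem_nhds hx)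

section main
variable {d k : ℕ} {V : Set (EuclideanSpace ℝ (Fin d))}
  {σ f : EuclideanSpace ℝ (Fin d) → ℝ}

lemma hasFDerivAt_phi (hV : IsOpen V) (hσ : ContDiffOn ℝ (⊤:ℕ∞) σ V)
    (hf : ContDiffOn ℝ (⊤:ℕ∞) f V) {x} (hx : x ∈ V) :
    HasFDerivAt (fun y => σ y * (1 + f y * σ y ^ k))
      (σ x • (f x • (((k:ℝ) * σ x ^ (k-1)) • fderiv ℝ σ x) + (σ x ^ k) • fderiv ℝ f x)
        + (1 + f x * σ x ^ k) • fderiv ℝ σ x) x := by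
  have hsd := (diffAt hV hσ hx).hasFDerivAt
  have hfd := (diffAt hV hf hx).hasFDerivAt
  have hpow : HasFDerivAt (fun y => σ y ^ k) (((k:ℝ) * σ x ^ (k-1)) • fderiv ℝ σ x) x :=
    (hasDerivAt_pow k (σ x)).comp_hasFDerivAt x hsd
  exact hsd.mul ((hfd.mul hpow).const_add 1)

lemma Dp_phi (hk1 : 1 ≤ k) (hV : IsOpen V) (hσ : ContDiffOn ℝ (⊤:ℕ∞) σ V)
    (hf : ContDiffOn ℝ (⊤:ℕ∞) f V) (i : Fin d) {x} (hx : x ∈ V) :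
    Dp i (fun y => σ y * (1 + f y * σ y ^ k)) x
      = (1 + ((k:ℝ)+1) * f x * σ x ^ k) * Dp i σ x + σ x ^ (k+1) * Dp i f x := by
  have h := (hasFDerivAt_phi hV hσ hf hx (k := k)).fderiv
  rw [Dp, h]
  simp only [ContinuousLinearMap.add_apply, ContinuousLinearMap.smul_apply, smul_eq_mul, Dp]
  have e1 : σ x ^ k = σ x * σ x ^ (k-1) := by
    conv_lhs => rw [show k = (k-1)+1 by omega]
    rw [pow_succ']
  have e2 : σ x ^ (k+1) = σ x * σ x ^ k := by rw [pow_succ']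
  rw [e2, e1]; ring

lemma Dp2_phi (hk1 : 1 ≤ k) (hV : IsOpen V) (hσ : ContDiffOn ℝ (⊤:ℕ∞) σ V)
    (hf : ContDiffOn ℝ (⊤:ℕ∞) f V) (i : Fin d) {x} (hx : x ∈ V) :
    Dp i (Dp i (fun y => σ y * (1 + f y * σ y ^ k))) x
      = (1 + ((k:ℝ)+1) * f x * σ x ^ k) * Dp i (Dp i σ) x
        + 2*((k:ℝ)+1) * σ x ^ k * Dp i σ x * Dp i f x
        + (k:ℝ)*((k:ℝ)+1) * f x * σ x ^ (k-1) * (Dp i σ x)^2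
        + σ x ^ (k+1) * Dp i (Dp i f) x := by
  set H : EuclideanSpace ℝ (Fin d) → ℝ := fun y =>
    (1 + ((k:ℝ)+1) * f y * σ y ^ k) * Dp i σ y + σ y ^ (k+1) * Dp i f y with hH
  have heq : Dp i (fun y => σ y * (1 + f y * σ y ^ k)) =ᶠ[nhds x] H := by
    filter_upwards [hV.mem_nhds hx] with y hy
    exact Dp_phi hk1 hV hσ hf i hy
  have h0 : Dp i (Dp i (fun y => σ y * (1 + f y * σ y ^ k))) x
      = fderiv ℝ H x (EuclideanSpace.single i 1) := by
    rw [Dp, heq.fderiv_eq]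
  rw [h0]
  have hsd := (diffAt hV hσ hx).hasFDerivAt
  have hfd := (diffAt hV hf hx).hasFDerivAt
  have hpd := (diffAt hV (contDiffOn_Dp hV hσ i) hx).hasFDerivAt
  have hqd := (diffAt hV (contDiffOn_Dp hV hf i) hx).hasFDerivAt
  have hpow : HasFDerivAt (fun y => σ y ^ k) (((k:ℝ) * σ x ^ (k-1)) • fderiv ℝ σ x) x :=
    (hasDerivAt_pow k (σ x)).comp_hasFDerivAt x hsd
  have hpow1 : HasFDerivAt (fun y => σ y ^ (k+1))
      ((((k:ℝ)+1) * σ x ^ k) • fderiv ℝ σ x) x := by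
    have := (hasDerivAt_pow (k+1) (σ x)).comp_hasFDerivAt x hsd
    simpa [Function.comp_def] using this
  have ha : HasFDerivAt (fun y => 1 + ((k:ℝ)+1) * f y * σ y ^ k)
      (((k:ℝ)+1) • ((f x • (((k:ℝ) * σ x ^ (k-1)) • fderiv ℝ σ x)
        + (σ x ^ k) • fderiv ℝ f x))) x := by
    have h1 := (hfd.mul hpow).const_mul ((k:ℝ)+1)
    have h2 := h1.const_add 1
    have e : (fun y => 1 + ((k:ℝ)+1) * f y * σ y ^ k)
        = (fun y => 1 + ((k:ℝ)+1) * (f * fun y => σ y ^ k) y) := by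
      funext y; simp only [Pi.mul_apply]; ring
    rw [e]; exact h2
  have hHd : HasFDerivAt H
      ((1 + ((k:ℝ)+1) * f x * σ x ^ k) • fderiv ℝ (Dp i σ) x
        + Dp i σ x • (((k:ℝ)+1) • ((f x • (((k:ℝ) * σ x ^ (k-1)) • fderiv ℝ σ x)
          + (σ x ^ k) • fderiv ℝ f x)))
        + ((σ x ^ (k+1)) • fderiv ℝ (Dp i f) x
          + Dp i f x • ((((k:ℝ)+1) * σ x ^ k) • fderiv ℝ σ x))) x :=
    (ha.mul hpd).add (hpow1.mul hqd)
  rw [hHd.fderiv]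
  simp only [ContinuousLinearMap.add_apply, ContinuousLinearMap.smul_apply, smul_eq_mul]
  have e1 : σ x ^ k = σ x * σ x ^ (k-1) := by
    conv_lhs => rw [show k = (k-1)+1 by omega]
    rw [pow_succ']
  have e2 : σ x ^ (k+1) = σ x * σ x ^ k := by rw [pow_succ']
  show _ = _ + _ + _ + _ * Dp i (Dp i f) x
  rw [show fderiv ℝ (Dp i σ) x (EuclideanSpace.single i 1) = Dp i (Dp i σ) x from rfl,
    show fderiv ℝ (Dp i f) x (EuclideanSpace.single i 1) = Dp i (Dp i f) x from rfl,
    show fderiv ℝ σ x (EuclideanSpace.single i 1) = Dp i σ x from rfl,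
    show fderiv ℝ f x (EuclideanSpace.single i 1) = Dp i f x from rfl]
  ring

end main

/-- the order-by-order improvement step: if `S(σ) = 1 + σ^k·A` with
`1 ≤ k ≤ d − 1`, then there is a correction `σ' = σ·(1 + f·σ^k)`, on a neighbourhood `V`
of `Z`, with `S(σ') = 1 + σ^{k+1}·A'`. -/
theorem statement3 (d : ℕ) (hd : 3 ≤ d)
    (U Z : Set (EuclideanSpace ℝ (Fin d))) (hU : IsOpen U)
    (σ A : EuclideanSpace ℝ (Fin d) → ℝ) (hσ : IsDefiningFn σ U Z)
    (k : ℕ) (hk1 : 1 ≤ k) (hkd : k ≤ d - 1)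
    (hA : ContDiffOn ℝ (⊤ : ℕ∞) A U)
    (hS : ∀ x ∈ U, Scurv σ x = 1 + σ x ^ k * A x) :
    ∃ (V : Set (EuclideanSpace ℝ (Fin d))) (f : EuclideanSpace ℝ (Fin d) → ℝ),
      IsOpen V ∧ Z ⊆ V ∧ V ⊆ U ∧ ContDiffOn ℝ (⊤ : ℕ∞) f V ∧
      IsDefiningFn (fun x => σ x * (1 + f x * σ x ^ k)) V Z ∧
      ∃ A' : EuclideanSpace ℝ (Fin d) → ℝ, ContDiffOn ℝ (⊤ : ℕ∞) A' V ∧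
        ∀ x ∈ V, Scurv (fun y => σ y * (1 + f y * σ y ^ k)) x
          = 1 + σ x ^ (k + 1) * A' x := by
  obtain ⟨hσs, hZ, hσd⟩ := hσ
  have hkdlt : k < d := by omega
  have hDne : (d:ℝ) ≠ 0 := by
    have : (0:ℝ) < (d:ℝ) := by exact_mod_cast (by omega : 0 < d)
    exact this.ne'
  have hKD : (k:ℝ) < (d:ℝ) := by exact_mod_cast hkdlt
  have hDKne : (d:ℝ) - (k:ℝ) ≠ 0 := sub_ne_zero.mpr hKD.ne'
  have hK1ne : ((k:ℝ)+1) ≠ 0 := by positivity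
  have hcne : (2*((k:ℝ)+1)*((d:ℝ)-(k:ℝ))) ≠ 0 := by
    refine mul_ne_zero (mul_ne_zero two_ne_zero hK1ne) hDKne
  -- the squared gradient of σ
  set S1fn : EuclideanSpace ℝ (Fin d) → ℝ := fun y => ∑ i, (Dp i σ y)^2 with hS1fn
  have hS1U : ContDiffOn ℝ (⊤:ℕ∞) S1fn U :=
    ContDiffOn.sum fun i _ => (contDiffOn_Dp hU hσs i).pow 2
  set V₀ : Set (EuclideanSpace ℝ (Fin d)) := U ∩ S1fn ⁻¹' ({0}ᶜ) with hV₀def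
  have hV₀ : IsOpen V₀ := hS1U.continuousOn.isOpen_inter_preimage hU isOpen_compl_singleton
  have hV₀U : V₀ ⊆ U := Set.inter_subset_left
  -- the correction function f
  set f : EuclideanSpace ℝ (Fin d) → ℝ :=
    fun y => -((d:ℝ) * A y) / (2*((k:ℝ)+1)*((d:ℝ)-(k:ℝ)) * S1fn y) with hfdef
  have hfV₀ : ContDiffOn ℝ (⊤:ℕ∞) f V₀ := by
    refine ContDiffOn.div ((contDiffOn_const.mul (hA.mono hV₀U)).neg)
      (contDiffOn_const.mul (hS1U.mono hV₀U)) ?_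
    intro x hx
    exact mul_ne_zero hcne hx.2
  -- the final neighbourhood
  set V : Set (EuclideanSpace ℝ (Fin d)) :=
    V₀ ∩ (fun y => f y * σ y ^ k) ⁻¹' (Set.Ioo (-1:ℝ) 1) with hVdef
  have hV : IsOpen V := by
    refine ContinuousOn.isOpen_inter_preimage ?_ hV₀ isOpen_Ioo
    exact (hfV₀.mul ((hσs.mono hV₀U).pow k)).continuousOn
  have hVV₀ : V ⊆ V₀ := Set.inter_subset_left
  have hVU : V ⊆ U := fun x hx => hV₀U (hVV₀ hx)
  have hσV : ContDiffOn ℝ (⊤:ℕ∞) σ V := hσs.mono hVU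
  have hfV : ContDiffOn ℝ (⊤:ℕ∞) f V := hfV₀.mono hVV₀
  -- Z ⊆ V
  have hS1Z : ∀ x ∈ Z, S1fn x = 1 := by
    intro x hxZ
    obtain ⟨hxU, hσ0⟩ : x ∈ U ∧ σ x = 0 := by rwa [hZ] at hxZ
    have h := hS x hxU
    rw [scurv_eq] at h
    simpa [hσ0, zero_pow (by omega : k ≠ 0)] using h
  have hZV : Z ⊆ V := by
    intro x hxZ
    obtain ⟨hxU, hσ0⟩ : x ∈ U ∧ σ x = 0 := by rwa [hZ] at hxZ
    refine ⟨⟨hxU, ?_⟩, ?_⟩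
    · simp [hS1Z x hxZ]
    · simp [Set.mem_Ioo, hσ0, zero_pow (by omega : k ≠ 0)]
  -- positivity of the factor on V
  have hfac : ∀ x ∈ V, 0 < 1 + f x * σ x ^ k := by
    intro x hx
    have h := hx.2
    simp only [Set.mem_preimage, Set.mem_Ioo] at h
    linarith [h.1]
  -- σ' is a defining function
  have hφs : ContDiffOn ℝ (⊤:ℕ∞) (fun y => σ y * (1 + f y * σ y ^ k)) V :=
    hσV.mul (contDiffOn_const.add (hfV.mul (hσV.pow k)))
  have hZeq : Z = {x ∈ V | σ x * (1 + f x * σ x ^ k) = 0} := by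
    ext x
    constructor
    · intro hxZ
      obtain ⟨hxU, hσ0⟩ : x ∈ U ∧ σ x = 0 := by rwa [hZ] at hxZ
      exact ⟨hZV hxZ, by simp [hσ0]⟩
    · rintro ⟨hxV, hφ0⟩
      have := hfac x hxV
      have hσ0 : σ x = 0 := by
        rcases mul_eq_zero.1 hφ0 with h | h
        · exact h
        · linarith
      rw [hZ]; exact ⟨hVU hxV, hσ0⟩
  have hφd : ∀ x ∈ Z, fderiv ℝ (fun y => σ y * (1 + f y * σ y ^ k)) x ≠ 0 := by
    intro x hxZ
    obtain ⟨hxU, hσ0⟩ : x ∈ U ∧ σ x = 0 := by rwa [hZ] at hxZ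
    have h := (hasFDerivAt_phi hV hσV hfV (hZV hxZ) (k := k)).fderiv
    rw [h]
    simpa [hσ0, zero_pow (by omega : k ≠ 0)] using hσd x hxZ
  -- the remaining smooth data
  set S2fn : EuclideanSpace ℝ (Fin d) → ℝ := fun y => ∑ i, (Dp i f y)^2 with hS2fn
  set Tfn : EuclideanSpace ℝ (Fin d) → ℝ := fun y => ∑ i, Dp i σ y * Dp i f y with hTfn
  set Lfn : EuclideanSpace ℝ (Fin d) → ℝ := fun y => ∑ i, Dp i (Dp i σ) y with hLfn
  set Mfn : EuclideanSpace ℝ (Fin d) → ℝ := fun y => ∑ i, Dp i (Dp i f) y with hMfn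
  have hS2V : ContDiffOn ℝ (⊤:ℕ∞) S2fn V :=
    ContDiffOn.sum fun i _ => (contDiffOn_Dp hV hfV i).pow 2
  have hTV : ContDiffOn ℝ (⊤:ℕ∞) Tfn V :=
    ContDiffOn.sum fun i _ => (contDiffOn_Dp hV hσV i).mul (contDiffOn_Dp hV hfV i)
  have hLV : ContDiffOn ℝ (⊤:ℕ∞) Lfn V :=
    ContDiffOn.sum fun i _ => contDiffOn_Dp hV (contDiffOn_Dp hV hσV i) i
  have hMV : ContDiffOn ℝ (⊤:ℕ∞) Mfn V :=
    ContDiffOn.sum fun i _ => contDiffOn_Dp hV (contDiffOn_Dp hV hfV i) i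
  have hS1V : ContDiffOn ℝ (⊤:ℕ∞) S1fn V := hS1U.mono hVU
  -- the new error term
  set A' : EuclideanSpace ℝ (Fin d) → ℝ := fun y =>
    ((d:ℝ)*( ((k:ℝ)+1)^2*(f y)^2*σ y^(k-1)*S1fn y + 2*Tfn y
        + 2*((k:ℝ)+1)*(f y)*σ y^k*Tfn y + σ y^(k+1)*S2fn y )
      - 2*( (2+2*(k:ℝ))*Tfn y + (2+(k:ℝ))*(f y)*Lfn y + σ y*Mfn y
        + 2*((k:ℝ)+1)*(f y)*σ y^k*Tfn y + (k:ℝ)*((k:ℝ)+1)*(f y)^2*σ y^(k-1)*S1fn y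
        + ((k:ℝ)+1)*(f y)^2*σ y^k*Lfn y + (f y)*σ y^(k+1)*Mfn y )) / (d:ℝ) with hA'def
  have hA'V : ContDiffOn ℝ (⊤:ℕ∞) A' V := by
    apply ContDiffOn.div_const
    apply ContDiffOn.sub
    · apply ContDiffOn.mul contDiffOn_const
      refine (((((contDiffOn_const.mul (hfV.pow 2)).mul (hσV.pow (k-1))).mul hS1V).add
        (contDiffOn_const.mul hTV)).add
        (((contDiffOn_const.mul hfV).mul (hσV.pow k)).mul hTV)).add
        ((hσV.pow (k+1)).mul hS2V)
    · apply ContDiffOn.mul contDiffOn_const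
      exact ((((((contDiffOn_const.mul hTV).add
        ((contDiffOn_const.mul hfV).mul hLV)).add
        (hσV.mul hMV)).add
        (((contDiffOn_const.mul hfV).mul (hσV.pow k)).mul hTV)).add
        (((contDiffOn_const.mul (hfV.pow 2)).mul (hσV.pow (k-1))).mul hS1V)).add
        (((contDiffOn_const.mul (hfV.pow 2)).mul (hσV.pow k)).mul hLV)).add
        ((hfV.mul (hσV.pow (k+1))).mul hMV)
  refine ⟨V, f, hV, hZV, hVU, hfV, ⟨hφs, hZeq, hφd⟩, A', hA'V, ?_⟩
  intro x hx
  have hxV₀ : x ∈ V₀ := hVV₀ hx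
  have hxU : x ∈ U := hVU hx
  have hS1x : S1fn x ≠ 0 := hxV₀.2
  have e1 : σ x ^ k = σ x * σ x ^ (k-1) := by
    conv_lhs => rw [show k = (k-1)+1 by omega]
    rw [pow_succ']
  have e2 : σ x ^ (k+1) = σ x * (σ x * σ x ^ (k-1)) := by rw [pow_succ', e1]
  have h1' : S1fn x - 2*σ x/(d:ℝ) * Lfn x = 1 + σ x^k*A x := by
    have h1 := hS x hxU
    rw [scurv_eq] at h1
    exact h1
  have h1'' : (d:ℝ)*S1fn x = (d:ℝ) + 2*σ x*Lfn x + (d:ℝ)*(σ x^k)*A x := by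
    field_simp at h1'
    linarith
  have h2 : 2*((k:ℝ)+1)*((d:ℝ)-(k:ℝ))*(f x)*S1fn x = -((d:ℝ)*A x) := by
    simp only [hfdef]
    field_simp
  have hsum1 : ∑ i, (Dp i (fun y => σ y * (1 + f y * σ y ^ k)) x)^2
      = (1 + ((k:ℝ)+1)*f x*σ x^k)^2 * S1fn x
        + 2*(1 + ((k:ℝ)+1)*f x*σ x^k)*(σ x^(k+1)) * Tfn x
        + (σ x^(k+1))^2 * S2fn x := by
    simp only [hS1fn, hTfn, hS2fn, Finset.mul_sum]
    rw [← Finset.sum_add_distrib, ← Finset.sum_add_distrib]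
    refine Finset.sum_congr rfl fun i _ => ?_
    rw [Dp_phi hk1 hV hσV hfV i hx]; ring
  have hsum2 : ∑ i, Dp i (Dp i (fun y => σ y * (1 + f y * σ y ^ k))) x
      = (1 + ((k:ℝ)+1)*f x*σ x^k) * Lfn x
        + 2*((k:ℝ)+1)*σ x^k * Tfn x
        + (k:ℝ)*((k:ℝ)+1)*f x*σ x^(k-1) * S1fn x
        + σ x^(k+1) * Mfn x := by
    simp only [hS1fn, hTfn, hLfn, hMfn, Finset.mul_sum]
    rw [← Finset.sum_add_distrib, ← Finset.sum_add_distrib, ← Finset.sum_add_distrib]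
    refine Finset.sum_congr rfl fun i _ => ?_
    rw [Dp2_phi hk1 hV hσV hfV i hx]; ring
  rw [scurv_eq, hsum1, hsum2]
  simp only [hA'def]
  rw [e1] at h1''
  rw [e2, e1]
  field_simp
  linear_combination h1'' + (σ x * σ x^(k-1)) * h2
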